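/- Let r ≥ 1, parameters μ₁,…,μ_r and variables u₁,…,u_r. Define P_k = Σ_{|n|=k} Π_{i=1}^r (μ_i)_{n_i} u_i^{n_i}/n_i!, e_i = Σ_{S⊆{1,…,r}, |S|=i} Π_{j∈S} u_j (elementary symmetric polynomials), and f_i = Σ_{S⊆{1,…,r}, |S|=i} (Σ_{j∈S} μ_j) Π_{j∈S} u_j. Then for every k ≥ 1: k·P_k = Σ_{i=1}^{min(r,k)} (-1)^{i-1} ((k-i)·e_i + f_i)·P_{k-i}. -/

import Mathlib

open Finset

/-- Pochhammer symbol `(x)_n`. -/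
noncomputable def poch (x : ℝ) (n : ℕ) : ℝ := (ascPochhammer ℝ n).eval x

open PowerSeries in
noncomputable def FF (x y : ℝ) : ℝ⟦X⟧ :=
  PowerSeries.mk fun n => poch x n * y ^ n / (n.factorial : ℝ)

lemma poch_succ (x : ℝ) (n : ℕ) : poch x (n+1) = poch x n * (x + n) := by
  simp [poch, ascPochhammer_succ_right]

section PS
open PowerSeries

lemma single_ode (x y : ℝ) :
    (1 - C y * X) * d⁄dX ℝ (FF x y) = C (x*y) * FF x y := by
  ext n
  rw [sub_mul, one_mul, map_sub, coeff_C_mul, mul_assoc, coeff_C_mul]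
  cases n with
  | zero =>
    simp [FF, coeff_derivative, coeff_mk, poch_succ, poch]
  | succ n =>
    simp only [FF]
    rw [coeff_succ_X_mul, coeff_derivative, coeff_derivative, coeff_mk, coeff_mk]
    rw [poch_succ, poch_succ]
    have h1 : ((n+1).factorial : ℝ) = (n.factorial : ℝ) * (n+1) := by
      push_cast [Nat.factorial_succ]; ring
    have h2 : ((n+1+1).factorial : ℝ) = (n.factorial : ℝ) * (n+1) * (n+1+1) := by
      push_cast [Nat.factorial_succ]; ring
    have hn : (n.factorial : ℝ) ≠ 0 := Nat.cast_ne_zero.2 n.factorial_ne_zero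
    rw [h1, h2]
    push_cast
    field_simp
    ring

lemma prod_ode {r : ℕ} (μ u : Fin r → ℝ) (s : Finset (Fin r)) :
    (∏ j ∈ s, (1 - C (u j) * X)) * d⁄dX ℝ (∏ j ∈ s, FF (μ j) (u j))
    = (∑ i ∈ s, C (μ i * u i) * ∏ j ∈ s.erase i, (1 - C (u j) * X)) *
      ∏ j ∈ s, FF (μ j) (u j) := by
  induction s using Finset.induction with
  | empty => simp
  | @insert a s ha ih =>
    rw [Finset.prod_insert ha, Finset.prod_insert ha, Finset.sum_insert ha,
      Finset.erase_insert ha]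
    have hD : d⁄dX ℝ (FF (μ a) (u a) * ∏ j ∈ s, FF (μ j) (u j))
        = FF (μ a) (u a) * d⁄dX ℝ (∏ j ∈ s, FF (μ j) (u j))
          + (∏ j ∈ s, FF (μ j) (u j)) * d⁄dX ℝ (FF (μ a) (u a)) := by
      rw [Derivation.leibniz]; simp [smul_eq_mul]
    rw [hD]
    have hsum : ∑ i ∈ s, C (μ i * u i) * ∏ j ∈ (insert a s).erase i, (1 - C (u j) * X)
        = (1 - C (u a) * X) *
          ∑ i ∈ s, C (μ i * u i) * ∏ j ∈ s.erase i, (1 - C (u j) * X) := by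
      rw [Finset.mul_sum]
      refine Finset.sum_congr rfl fun i hi => ?_
      have hne : a ≠ i := fun h => ha (h ▸ hi)
      rw [Finset.erase_insert_of_ne hne,
        Finset.prod_insert (fun h => ha (Finset.mem_of_mem_erase h))]
      ring
    rw [hsum]
    linear_combination ((1 - C (u a) * X) * FF (μ a) (u a)) * ih
      + ((∏ j ∈ s, (1 - C (u j) * X)) * ∏ j ∈ s, FF (μ j) (u j)) * single_ode (μ a) (u a)

lemma coeffE {r : ℕ} (u : Fin r → ℝ) (s : Finset (Fin r)) (m : ℕ) :
    coeff m (∏ j ∈ s, (1 - C (u j) * X))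
      = (-1 : ℝ)^m * ∑ S ∈ s.powersetCard m, ∏ j ∈ S, u j := by
  induction s using Finset.induction generalizing m with
  | empty =>
    cases m with
    | zero => simp
    | succ m =>
      rw [Finset.powersetCard_eq_empty.2 (by simp)]
      simp [PowerSeries.coeff_one]
  | @insert a s ha ih =>
    rw [Finset.prod_insert ha]
    have expand : (1 - C (u a) * X) * (∏ j ∈ s, (1 - C (u j) * X))
        = (∏ j ∈ s, (1 - C (u j) * X)) - C (u a) * (X * ∏ j ∈ s, (1 - C (u j) * X)) := by
      ring
    rw [expand, map_sub, coeff_C_mul]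
    cases m with
    | zero => simp [ih, coeff_zero_X_mul]
    | succ m =>
      rw [coeff_succ_X_mul, ih, ih, Finset.powersetCard_succ_insert ha,
        Finset.sum_union, Finset.sum_image]
      · rw [Finset.mul_sum, Finset.mul_sum]
        have : ∀ S ∈ s.powersetCard m, ∏ j ∈ insert a S, u j = u a * ∏ j ∈ S, u j := by
          intro S hS
          exact Finset.prod_insert fun h => ha ((Finset.mem_powersetCard.1 hS).1 h)
        rw [Finset.sum_congr rfl this, mul_add, Finset.mul_sum, Finset.mul_sum, Finset.mul_sum,
          sub_eq_add_neg, ← Finset.sum_neg_distrib]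
        simp only [Nat.succ_eq_add_one]
        exact congrArg₂ (· + ·) (Finset.sum_congr rfl fun _ _ => by ring)
          (Finset.sum_congr rfl fun _ _ => by ring)
      · intro S hS T hT hST
        have haS : a ∉ S := fun h => ha ((Finset.mem_powersetCard.1 hS).1 h)
        have haT : a ∉ T := fun h => ha ((Finset.mem_powersetCard.1 hT).1 h)
        have := congrArg (Finset.erase · a) hST
        simpa [Finset.erase_insert haS, Finset.erase_insert haT] using this
      · rw [Finset.disjoint_left]
        intro S hS hS2
        obtain ⟨T, hT, rfl⟩ := Finset.mem_image.1 hS2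
        exact ha ((Finset.mem_powersetCard.1 hS).1 (Finset.mem_insert_self a T))

lemma coeffF {r : ℕ} (μ u : Fin r → ℝ) (k : ℕ) :
    coeff k (∏ j : Fin r, FF (μ j) (u j))
      = ∑ n ∈ Finset.Nat.antidiagonalTuple r k,
          ∏ i, poch (μ i) (n i) * u i ^ n i / ((n i).factorial : ℝ) := by
  rw [PowerSeries.coeff_prod]
  refine Finset.sum_nbij' (fun l => ⇑l) (fun n => Finsupp.equivFunOnFinite.symm n) ?_ ?_ ?_ ?_ ?_
  · intro l hl
    rw [Finset.mem_finsuppAntidiag] at hl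
    rw [Finset.Nat.mem_antidiagonalTuple]
    exact hl.1
  · intro n hn
    rw [Finset.Nat.mem_antidiagonalTuple] at hn
    rw [Finset.mem_finsuppAntidiag]
    exact ⟨by simpa using hn, Finset.subset_univ _⟩
  · intro l _; exact Finsupp.equivFunOnFinite.symm_apply_apply l
  · intro n _; rfl
  · intro l _
    simp [FF, coeff_mk]

end PS

lemma f_swap {r : ℕ} (μ u : Fin r → ℝ) (m : ℕ) :
    ∑ S ∈ Finset.powersetCard (m+1) (Finset.univ : Finset (Fin r)),
        (∑ j ∈ S, μ j) * ∏ j ∈ S, u j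
    = ∑ i : Fin r, μ i * u i *
        ∑ S ∈ (Finset.univ.erase i).powersetCard m, ∏ j ∈ S, u j := by
  have step1 : ∀ S ∈ Finset.powersetCard (m+1) (Finset.univ : Finset (Fin r)),
      (∑ j ∈ S, μ j) * ∏ j ∈ S, u j
        = ∑ i ∈ S, μ i * u i * ∏ j ∈ S.erase i, u j := by
    intro S _
    rw [Finset.sum_mul]
    refine Finset.sum_congr rfl fun i hi => ?_
    rw [← Finset.mul_prod_erase S u hi]
    ring
  rw [Finset.sum_congr rfl step1]
  have step2 : ∀ i : Fin r, μ i * u i * ∑ S ∈ (Finset.univ.erase i).powersetCard m, ∏ j ∈ S, u j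
      = ∑ S ∈ (Finset.univ.erase i).powersetCard m, μ i * u i * ∏ j ∈ S, u j := by
    intro i; rw [Finset.mul_sum]
  rw [Finset.sum_congr rfl fun i _ => step2 i]
  rw [Finset.sum_sigma', Finset.sum_sigma']
  refine Finset.sum_nbij' (fun p => ⟨p.2, p.1.erase p.2⟩) (fun q => ⟨insert q.1 q.2, q.1⟩)
    ?_ ?_ ?_ ?_ ?_
  · rintro ⟨S, i⟩ hp
    simp only [Finset.mem_sigma, Finset.mem_powersetCard] at hp ⊢
    obtain ⟨⟨hSsub, hScard⟩, hi⟩ := hp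
    refine ⟨Finset.mem_univ _, ?_, ?_⟩
    · intro x hx
      rw [Finset.mem_erase] at hx ⊢
      exact ⟨hx.1, Finset.mem_univ _⟩
    · rw [Finset.card_erase_of_mem hi, hScard]; omega
  · rintro ⟨i, S⟩ hq
    simp only [Finset.mem_sigma, Finset.mem_powersetCard] at hq ⊢
    obtain ⟨-, hSsub, hScard⟩ := hq
    have hiS : i ∉ S := fun h => (Finset.mem_erase.1 (hSsub h)).1 rfl
    exact ⟨⟨Finset.subset_univ _, by rw [Finset.card_insert_of_notMem hiS, hScard]⟩,
      Finset.mem_insert_self _ _⟩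
  · rintro ⟨S, i⟩ hp
    simp only [Finset.mem_sigma] at hp
    have h1 : insert i (S.erase i) = S := Finset.insert_erase hp.2
    simp [h1]
  · rintro ⟨i, S⟩ hq
    simp only [Finset.mem_sigma, Finset.mem_powersetCard] at hq
    have hiS : i ∉ S := fun h => (Finset.mem_erase.1 (hq.2.1 h)).1 rfl
    have h1 : (insert i S).erase i = S := Finset.erase_insert hiS
    simp [h1]
  · rintro ⟨S, i⟩ _; rfl

/-- recursion `k P_k = Σ_{i=1}^{min(r,k)} (-1)^{i-1}((k-i) e_i + f_i) P_{k-i}`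
for `P_k = Σ_{|n|=k} Π (μᵢ)_{nᵢ} uᵢ^{nᵢ}/nᵢ!`, `e_i`, `f_i` the (weighted) elementary
symmetric polynomials. -/
theorem stmt1 (r : ℕ) (hr : 1 ≤ r) (μ u : Fin r → ℝ)
    (P : ℕ → ℝ)
    (hP : ∀ k, P k = ∑ n ∈ Finset.Nat.antidiagonalTuple r k,
        ∏ i, poch (μ i) (n i) * u i ^ n i / (Nat.factorial (n i)))
    (e f : ℕ → ℝ)
    (he : ∀ i, e i = ∑ S ∈ Finset.powersetCard i (Finset.univ : Finset (Fin r)),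
        ∏ j ∈ S, u j)
    (hf : ∀ i, f i = ∑ S ∈ Finset.powersetCard i (Finset.univ : Finset (Fin r)),
        (∑ j ∈ S, μ j) * ∏ j ∈ S, u j)
    (k : ℕ) (hk : 1 ≤ k) :
    (k : ℝ) * P k =
      ∑ i ∈ Finset.Icc 1 (min r k),
        (-1 : ℝ) ^ (i - 1) * (((k - i : ℕ) : ℝ) * e i + f i) * P (k - i) := by
  classical
  open PowerSeries in
  obtain ⟨m, rfl⟩ : ∃ m, k = m + 1 := ⟨k - 1, by omega⟩
  -- coefficient facts
  have hPF : ∀ n, coeff n (∏ j : Fin r, FF (μ j) (u j)) = P n := by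
    intro n; rw [coeffF, hP]
  have hE : ∀ a, coeff a (∏ j : Fin r, (1 - C (u j) * X)) = (-1 : ℝ)^a * e a := by
    intro a; rw [coeffE, he]
  have hG : ∀ a, coeff a
      (∑ i : Fin r, C (μ i * u i) * ∏ j ∈ (Finset.univ.erase i), (1 - C (u j) * X))
      = (-1 : ℝ)^a * f (a+1) := by
    intro a
    rw [map_sum, hf, f_swap]
    rw [Finset.mul_sum]
    refine Finset.sum_congr rfl fun i _ => ?_
    rw [coeff_C_mul, coeffE]
    ring
  -- the power series identity, coefficient m
  have key := congrArg (coeff m) (prod_ode μ u Finset.univ)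
  rw [coeff_mul, coeff_mul] at key
  rw [Finset.Nat.sum_antidiagonal_eq_sum_range_succ_mk, 
      Finset.Nat.sum_antidiagonal_eq_sum_range_succ_mk] at key
  simp only [hE, hPF, hG, coeff_derivative] at key
  -- canonical form of the coefficient identity
  have key2 : ∑ x ∈ Finset.range (m+1), (-1:ℝ)^x * e x * (((m+1-x : ℕ):ℝ) * P (m+1-x))
      = ∑ x ∈ Finset.range (m+1), (-1:ℝ)^x * f (x+1) * P (m-x) := by
    rw [← key]
    refine Finset.sum_congr rfl fun x hx => ?_
    have h2 : m + 1 - x = (m - x) + 1 := by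
      have := Finset.mem_range.1 hx; omega
    rw [h2]
    push_cast
    ring
  -- extend the target sum from Icc 1 (min r (m+1)) to Icc 1 (m+1)
  have hsub : Finset.Icc 1 (min r (m+1)) ⊆ Finset.Icc 1 (m+1) :=
    Finset.Icc_subset_Icc_right (min_le_right _ _)
  have hext : ∑ i ∈ Finset.Icc 1 (min r (m+1)),
        (-1:ℝ)^(i-1) * (((m+1-i : ℕ):ℝ) * e i + f i) * P (m+1-i)
      = ∑ i ∈ Finset.Icc 1 (m+1),
        (-1:ℝ)^(i-1) * (((m+1-i : ℕ):ℝ) * e i + f i) * P (m+1-i) := by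
    refine Finset.sum_subset hsub fun x hx hnx => ?_
    have hx' := Finset.mem_Icc.1 hx
    have hrx : r < x := by
      rcases le_or_gt x r with h | h
      · exact absurd (Finset.mem_Icc.2 ⟨hx'.1, le_min h hx'.2⟩) hnx
      · exact h
    have hemp : (Finset.univ : Finset (Fin r)).powersetCard x = ∅ :=
      Finset.powersetCard_eq_empty.2 (by simpa using hrx)
    have he0 : e x = 0 := by rw [he, hemp, Finset.sum_empty]
    have hf0 : f x = 0 := by rw [hf, hemp, Finset.sum_empty]
    rw [he0, hf0]
    ring
  -- reindex Icc 1 (m+1) to range (m+1)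
  have hre : ∑ i ∈ Finset.Icc 1 (m+1),
        (-1:ℝ)^(i-1) * (((m+1-i : ℕ):ℝ) * e i + f i) * P (m+1-i)
      = ∑ a ∈ Finset.range (m+1),
        ((-1:ℝ)^a * e (a+1) * (((m-a : ℕ):ℝ) * P (m-a)) + (-1:ℝ)^a * f (a+1) * P (m-a)) := by
    rw [← Finset.Ico_add_one_right_eq_Icc, Finset.sum_Ico_eq_sum_range]
    have hn : m + 1 + 1 - 1 = m + 1 := by omega
    rw [hn]
    refine Finset.sum_congr rfl fun a ha => ?_
    have h1 : 1 + a - 1 = a := by omega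
    have h2 : m + 1 - (1 + a) = m - a := by omega
    rw [h1, h2]
    ring
  -- split off the last (zero) term of the e-sum and the first term of key2's LHS
  have hS1 : ∑ a ∈ Finset.range (m+1), (-1:ℝ)^a * e (a+1) * (((m-a : ℕ):ℝ) * P (m-a))
      = ∑ a ∈ Finset.range m, (-1:ℝ)^a * e (a+1) * (((m-a : ℕ):ℝ) * P (m-a)) := by
    rw [Finset.sum_range_succ, Nat.sub_self]
    simp
  have he0 : e 0 = 1 := by
    rw [he, Finset.powersetCard_zero, Finset.sum_singleton, Finset.prod_empty]
  have hS0 : ∑ x ∈ Finset.range (m+1), (-1:ℝ)^x * e x * (((m+1-x : ℕ):ℝ) * P (m+1-x))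
      = ((m+1 : ℕ):ℝ) * P (m+1)
        + ∑ a ∈ Finset.range m, (-1:ℝ)^(a+1) * e (a+1) * (((m-a : ℕ):ℝ) * P (m-a)) := by
    rw [Finset.sum_range_succ']
    have hterm : ∀ a ∈ Finset.range m,
        (-1:ℝ)^(a+1) * e (a+1) * (((m+1-(a+1) : ℕ):ℝ) * P (m+1-(a+1)))
          = (-1:ℝ)^(a+1) * e (a+1) * (((m-a : ℕ):ℝ) * P (m-a)) := by
      intro a ha
      have h2 : m + 1 - (a+1) = m - a := by omega
      rw [h2]
    rw [Finset.sum_congr rfl hterm, Nat.sub_zero, pow_zero, he0]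
    ring
  have hcancel : ∑ a ∈ Finset.range m, (-1:ℝ)^a * e (a+1) * (((m-a : ℕ):ℝ) * P (m-a))
      + ∑ a ∈ Finset.range m, (-1:ℝ)^(a+1) * e (a+1) * (((m-a : ℕ):ℝ) * P (m-a)) = 0 := by
    rw [← Finset.sum_add_distrib]
    exact Finset.sum_eq_zero fun a _ => by ring
  rw [hext, hre, Finset.sum_add_distrib, hS1, ← key2, hS0]
  linear_combination -hcancel
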